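/- Let V be an n-dimensional real inner product space (n ≥ 2) and A ≠ 0 a self-adjoint endomorphism with (trace A)·A = A². Then the quadratic form x ↦ ⟨Ax, x⟩ equals (trace A)·⟨Px, x⟩ where P is orthogonal projection onto the one-dimensional subspace im A; in particular ⟨Ax,x⟩ has the same sign as trace A for all x, or is zero. -/

import Mathlib

open RealInnerProductSpace

theorem stmt_15 {V : Type*} [NormedAddCommGroup V] [InnerProductSpace ℝ V]
    [FiniteDimensional ℝ V] {n : ℕ} (hn : 2 ≤ n) (hdim : Module.finrank ℝ V = n)
    (A : V →ₗ[ℝ] V) (hA : A.IsSymmetric) (hA0 : A ≠ 0)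
    (h : (LinearMap.trace ℝ V A) • A = A ∘ₗ A) :
    ∃ P : V →ₗ[ℝ] V, P ∘ₗ P = P ∧ P.IsSymmetric ∧
      LinearMap.range P = LinearMap.range A ∧
      Module.finrank ℝ (LinearMap.range A) = 1 ∧
      (∀ x, ⟪A x, x⟫ = (LinearMap.trace ℝ V A) * ⟪P x, x⟫) ∧
      (∀ x, 0 ≤ (LinearMap.trace ℝ V A) * ⟪A x, x⟫) := by
  set t := LinearMap.trace ℝ V A with ht
  have ht0 : t ≠ 0 := by
    intro h0
    apply hA0
    ext x
    have hAx : ⟪A (A x), x⟫ = 0 := by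
      have := congrArg (fun f => f x) h
      simp only [LinearMap.smul_apply, LinearMap.comp_apply, h0, zero_smul] at this
      rw [← this]; simp
    have : ⟪A x, A x⟫ = 0 := by rw [← hA (A x) x]; exact hAx
    simpa using inner_self_eq_zero.mp this
  refine ⟨t⁻¹ • A, ?_, ?_, ?_, ?_, ?_, ?_⟩
  · ext x
    simp only [LinearMap.comp_apply, LinearMap.smul_apply, map_smul]
    have := congrArg (fun f => f x) h
    simp only [LinearMap.smul_apply, LinearMap.comp_apply] at this
    rw [← this, smul_smul, smul_smul]
    field_simp
  · intro x y
    simp only [LinearMap.smul_apply, inner_smul_left, inner_smul_right, hA x y,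
      RCLike.conj_to_real]
  · ext x
    simp only [LinearMap.mem_range]
    constructor
    · rintro ⟨y, rfl⟩; exact ⟨t⁻¹ • y, by simp⟩
    · rintro ⟨y, rfl⟩; exact ⟨t • y, by simp [smul_smul, mul_inv_cancel₀ ht0]⟩
  · have hPP : (t⁻¹ • A) ∘ₗ (t⁻¹ • A) = t⁻¹ • A := by
      ext x
      simp only [LinearMap.comp_apply, LinearMap.smul_apply, map_smul]
      have := congrArg (fun f => f x) h
      simp only [LinearMap.smul_apply, LinearMap.comp_apply] at this
      rw [← this, smul_smul, smul_smul]
      field_simp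
    obtain ⟨p, hp⟩ := (LinearMap.isProj_iff_isIdempotentElem _).mpr hPP
    have hrange : LinearMap.range (t⁻¹ • A) = LinearMap.range A := by
      ext x
      simp only [LinearMap.mem_range]
      constructor
      · rintro ⟨y, rfl⟩; exact ⟨t⁻¹ • y, by simp⟩
      · rintro ⟨y, rfl⟩; exact ⟨t • y, by simp [smul_smul, mul_inv_cancel₀ ht0]⟩
    have hp' : LinearMap.IsProj (LinearMap.range A) (t⁻¹ • A) := by
      constructor
      · intro x
        rw [← hrange]; exact LinearMap.mem_range_self _ x
      · intro x hx
        rw [← hrange] at hx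
        obtain ⟨y, rfl⟩ := hx
        have := congrArg (fun f => f y) hPP
        simpa using this
    have htr := hp'.trace
    have htrP : LinearMap.trace ℝ V (t⁻¹ • A) = 1 := by
      rw [map_smul, smul_eq_mul, ← ht, inv_mul_cancel₀ ht0]
    rw [htrP] at htr
    exact_mod_cast htr.symm
  · intro x
    simp only [LinearMap.smul_apply, inner_smul_left, RCLike.conj_to_real]
    rw [← mul_assoc, mul_inv_cancel₀ ht0, one_mul]
  · intro x
    have hAx : ⟪A x, x⟫ = t⁻¹ * (t * ⟪A x, x⟫) := by
      rw [← mul_assoc, inv_mul_cancel₀ ht0, one_mul]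
    have key : t * ⟪A x, x⟫ = ⟪A x, A x⟫ := by
      have := congrArg (fun f => f x) h
      simp only [LinearMap.smul_apply, LinearMap.comp_apply] at this
      calc t * ⟪A x, x⟫ = ⟪t • A x, x⟫ := by rw [inner_smul_left]; norm_num
        _ = ⟪A (A x), x⟫ := by rw [this]
        _ = ⟪A x, A x⟫ := hA (A x) x
    rw [key]
    exact real_inner_self_nonneg
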